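/- arXiv:2305.05520 — 2 statements merged into one kernel-verified Lean document; each statement's English description precedes it below -/
import Mathlib

section
/- Fix α_1>0, α_2>0 and for ρ ∈ (−1, min(√(α_2/α_1), √(α_1/α_2))) define γ(ρ) = (α_1+α_2−2ρ√(α_1 α_2))/(1−ρ^2). Then: (i) if ρ<0 then γ(ρ) > α_1+α_2; (ii) if ρ=0 then γ(ρ) = α_1+α_2; (iii) if 0 < ρ < min(√(α_2/α_1), √(α_1/α_2)) then max(α_1,α_2) < γ(ρ) < α_1+α_2; (iv) as ρ ↑ min(√(α_2/α_1), √(α_1/α_2)), γ(ρ) → max(α_1,α_2), i.e., at ρ = min(√(α_2/α_1), √(α_1/α_2)) the expression (α_1+α_2−2ρ√(α_1 α_2))/(1−ρ^2) equals max(α_1,α_2) when α_1 ≠ α_2. -/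
open Filter Real

lemma statement5_aux (α1 α2 : ℝ) (h1 : 0 < α1) (h2 : 0 < α2) (hle : α2 ≤ α1) :
    (∀ ρ : ℝ, -1 < ρ → ρ < 0 →
      α1 + α2 < (α1 + α2 - 2 * ρ * Real.sqrt (α1 * α2)) / (1 - ρ ^ 2)) ∧
    ((α1 + α2 - 2 * (0 : ℝ) * Real.sqrt (α1 * α2)) / (1 - (0 : ℝ) ^ 2) = α1 + α2) ∧
    (∀ ρ : ℝ, 0 < ρ → ρ < min (Real.sqrt (α2 / α1)) (Real.sqrt (α1 / α2)) →
      max α1 α2 < (α1 + α2 - 2 * ρ * Real.sqrt (α1 * α2)) / (1 - ρ ^ 2) ∧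
      (α1 + α2 - 2 * ρ * Real.sqrt (α1 * α2)) / (1 - ρ ^ 2) < α1 + α2) ∧
    (α1 ≠ α2 →
      Tendsto (fun ρ : ℝ => (α1 + α2 - 2 * ρ * Real.sqrt (α1 * α2)) / (1 - ρ ^ 2))
        (nhdsWithin (min (Real.sqrt (α2 / α1)) (Real.sqrt (α1 / α2)))
          (Set.Iio (min (Real.sqrt (α2 / α1)) (Real.sqrt (α1 / α2)))))
        (nhds (max α1 α2)) ∧
      (α1 + α2 - 2 * min (Real.sqrt (α2 / α1)) (Real.sqrt (α1 / α2)) * Real.sqrt (α1 * α2)) /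
          (1 - (min (Real.sqrt (α2 / α1)) (Real.sqrt (α1 / α2))) ^ 2) = max α1 α2) := by
  set s1 := Real.sqrt α1 with hs1def
  set s2 := Real.sqrt α2 with hs2def
  have hs1 : 0 < s1 := Real.sqrt_pos.mpr h1
  have hs2 : 0 < s2 := Real.sqrt_pos.mpr h2
  have hsq1 : s1 ^ 2 = α1 := Real.sq_sqrt h1.le
  have hsq2 : s2 ^ 2 = α2 := Real.sq_sqrt h2.le
  have hs21 : s2 ≤ s1 := Real.sqrt_le_sqrt hle
  have hmul : Real.sqrt (α1 * α2) = s1 * s2 := Real.sqrt_mul h1.le α2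
  have hdiv1 : Real.sqrt (α2 / α1) = s2 / s1 := Real.sqrt_div h2.le α1
  have hdiv2 : Real.sqrt (α1 / α2) = s1 / s2 := Real.sqrt_div h1.le α2
  have hmin : min (Real.sqrt (α2 / α1)) (Real.sqrt (α1 / α2)) = s2 / s1 := by
    rw [hdiv1, hdiv2, min_eq_left]
    rw [div_le_div_iff₀ hs1 hs2]
    nlinarith
  have hmax : max α1 α2 = α1 := max_eq_left hle
  refine ⟨?_, ?_, ?_, ?_⟩
  · intro ρ hρ1 hρ0
    have hden : 0 < 1 - ρ ^ 2 := by nlinarith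
    rw [hmul, lt_div_iff₀ hden]
    nlinarith [mul_pos hs1 hs2, mul_pos (mul_pos hs1 hs2) (mul_pos (neg_pos.mpr hρ0) (neg_pos.mpr hρ0))]
  · norm_num
  · intro ρ hρ0 hρm
    rw [hmin] at hρm
    have hρs : ρ * s1 < s2 := by rwa [lt_div_iff₀ hs1] at hρm
    have hρ1 : ρ < 1 := lt_of_lt_of_le hρm (by rw [div_le_one hs1]; exact hs21)
    have hden : 0 < 1 - ρ ^ 2 := by nlinarith
    rw [hmul, hmax]
    constructor
    · rw [lt_div_iff₀ hden]; nlinarith [sq_nonneg (s2 - ρ * s1)]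
    · rw [div_lt_iff₀ hden]; nlinarith [mul_pos hρ0 hs2, mul_pos hρ0 hs1]
  · intro hne
    have hs2lt : s2 < s1 := lt_of_le_of_ne hs21 (by
      intro h; apply hne; rw [← hsq1, ← hsq2, h])
    have hden : 0 < 1 - (s2 / s1) ^ 2 := by
      have : s2 / s1 < 1 := (div_lt_one hs1).mpr hs2lt
      have h0 : 0 ≤ s2 / s1 := div_nonneg hs2.le hs1.le
      nlinarith
    have heq : (α1 + α2 - 2 * (s2 / s1) * Real.sqrt (α1 * α2)) / (1 - (s2 / s1) ^ 2) = α1 := by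
      rw [hmul, ← hsq1, ← hsq2, div_eq_iff (ne_of_gt hden)]
      field_simp
      ring
    constructor
    · rw [hmin, hmax]
      have hc : ContinuousAt (fun ρ : ℝ => (α1 + α2 - 2 * ρ * Real.sqrt (α1 * α2)) / (1 - ρ ^ 2))
          (s2 / s1) := by
        apply ContinuousAt.div
        · fun_prop
        · fun_prop
        · exact ne_of_gt hden
      have := hc.tendsto.mono_left (nhdsWithin_le_nhds (s := Set.Iio (s2 / s1)))
      rwa [heq] at this
    · rw [hmin, hmax]; exact heq

/-- **Range of the joint tail index γ(ρ) for the bivariate P-GC model.**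
For fixed `α₁, α₂ > 0` and `γ(ρ) = (α₁+α₂−2ρ√(α₁α₂))/(1−ρ²)` on
`ρ ∈ (−1, min(√(α₂/α₁), √(α₁/α₂)))`:
(i) if `ρ < 0` then `γ(ρ) > α₁+α₂`; (ii) if `ρ = 0` then `γ(ρ) = α₁+α₂`;
(iii) if `0 < ρ < min(√(α₂/α₁), √(α₁/α₂))` then `max(α₁,α₂) < γ(ρ) < α₁+α₂`;
(iv) as `ρ ↑ min(√(α₂/α₁), √(α₁/α₂))`, `γ(ρ) → max(α₁,α₂)`; i.e. when `α₁ ≠ α₂` the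
expression at `ρ = min(√(α₂/α₁), √(α₁/α₂))` equals `max(α₁,α₂)`. -/
theorem statement5 (α1 α2 : ℝ) (h1 : 0 < α1) (h2 : 0 < α2) :
    (∀ ρ : ℝ, -1 < ρ → ρ < 0 →
      α1 + α2 < (α1 + α2 - 2 * ρ * Real.sqrt (α1 * α2)) / (1 - ρ ^ 2)) ∧
    ((α1 + α2 - 2 * (0 : ℝ) * Real.sqrt (α1 * α2)) / (1 - (0 : ℝ) ^ 2) = α1 + α2) ∧
    (∀ ρ : ℝ, 0 < ρ → ρ < min (Real.sqrt (α2 / α1)) (Real.sqrt (α1 / α2)) →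
      max α1 α2 < (α1 + α2 - 2 * ρ * Real.sqrt (α1 * α2)) / (1 - ρ ^ 2) ∧
      (α1 + α2 - 2 * ρ * Real.sqrt (α1 * α2)) / (1 - ρ ^ 2) < α1 + α2) ∧
    (α1 ≠ α2 →
      Tendsto (fun ρ : ℝ => (α1 + α2 - 2 * ρ * Real.sqrt (α1 * α2)) / (1 - ρ ^ 2))
        (nhdsWithin (min (Real.sqrt (α2 / α1)) (Real.sqrt (α1 / α2)))
          (Set.Iio (min (Real.sqrt (α2 / α1)) (Real.sqrt (α1 / α2)))))
        (nhds (max α1 α2)) ∧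
      (α1 + α2 - 2 * min (Real.sqrt (α2 / α1)) (Real.sqrt (α1 / α2)) * Real.sqrt (α1 * α2)) /
          (1 - (min (Real.sqrt (α2 / α1)) (Real.sqrt (α1 / α2))) ^ 2) = max α1 α2) := by
  rcases le_total α2 α1 with h | h
  · exact statement5_aux α1 α2 h1 h2 h
  · have := statement5_aux α2 α1 h2 h1 h
    rw [add_comm α2 α1, mul_comm α2 α1, min_comm (Real.sqrt (α1 / α2)) (Real.sqrt (α2 / α1)),
      max_comm α2 α1, ne_comm] at this
    exact this
end

section
/- Let α̂_1 > 0, α̂_2 > 0, γ̂ > 0. If ρ ∈ (−1,1) with ρ < min(√(α̂_2/α̂_1), √(α̂_1/α̂_2)) satisfies the quadratic equation γ̂ ρ^2 − 2√(α̂_1 α̂_2) ρ + (α̂_1 + α̂_2 − γ̂) = 0, then ρ is uniquely determined and equals (√(α̂_1 α̂_2) − √(α̂_1 α̂_2 + γ̂^2 − γ̂(α̂_1+α̂_2)))/γ̂; in particular the larger root (√(α̂_1 α̂_2) + √(α̂_1 α̂_2 + γ̂^2 − γ̂(α̂_1+α̂_2)))/γ̂ cannot satisfy the constraints. -/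
open Filter Real

/-- key lemma: any feasible root satisfies g*ρ < √(a1 a2). -/
lemma key18 (a1 a2 g : ℝ) (ha1 : 0 < a1) (ha2 : 0 < a2) (_hg : 0 < g)
    (ρ : ℝ) (hmem : ρ ∈ Set.Ioo (-1 : ℝ) 1)
    (hlt : ρ < min (Real.sqrt (a2 / a1)) (Real.sqrt (a1 / a2)))
    (heq : g * ρ ^ 2 - 2 * Real.sqrt (a1 * a2) * ρ + (a1 + a2 - g) = 0) :
    g * ρ < Real.sqrt (a1 * a2) := by
  obtain ⟨hm1, hm2⟩ := hmem
  have h1 : ρ < Real.sqrt (a2 / a1) := lt_of_lt_of_le hlt (min_le_left _ _)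
  have h2 : ρ < Real.sqrt (a1 / a2) := lt_of_lt_of_le hlt (min_le_right _ _)
  have hs1 : (0:ℝ) < Real.sqrt a1 := Real.sqrt_pos.mpr ha1
  have hs2 : (0:ℝ) < Real.sqrt a2 := Real.sqrt_pos.mpr ha2
  have hd1 : Real.sqrt (a2 / a1) = Real.sqrt a2 / Real.sqrt a1 := by
    rw [Real.sqrt_div ha2.le]
  have hd2 : Real.sqrt (a1 / a2) = Real.sqrt a1 / Real.sqrt a2 := by
    rw [Real.sqrt_div ha1.le]
  have hA : Real.sqrt a1 * ρ < Real.sqrt a2 := by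
    rw [hd1, lt_div_iff₀ hs1] at h1; linarith [h1]
  have hB : Real.sqrt a2 * ρ < Real.sqrt a1 := by
    rw [hd2, lt_div_iff₀ hs2] at h2; linarith [h2]
  have hsm : Real.sqrt (a1 * a2) = Real.sqrt a1 * Real.sqrt a2 := Real.sqrt_mul ha1.le _
  have hsq1 : Real.sqrt a1 ^ 2 = a1 := Real.sq_sqrt ha1.le
  have hsq2 : Real.sqrt a2 ^ 2 = a2 := Real.sq_sqrt ha2.le
  rw [hsm] at heq ⊢
  nlinarith [mul_pos (sub_pos.mpr hA) (sub_pos.mpr hB), mul_pos hs1 hs2,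
    mul_pos (sub_pos.mpr hm2) (by linarith : (0:ℝ) < ρ + 1)]

/-- **Uniqueness of the feasible root of the quadratic in ρ.**
If `ρ ∈ (−1,1)` with `ρ < min(√(α̂₂/α̂₁), √(α̂₁/α̂₂))` satisfies the quadratic equation
`γ̂ ρ² − 2√(α̂₁α̂₂) ρ + (α̂₁ + α̂₂ − γ̂) = 0`, then `ρ` is uniquely determined and equals the
smaller root `(√(α̂₁α̂₂) − √(α̂₁α̂₂ + γ̂² − γ̂(α̂₁+α̂₂)))/γ̂`; in particular the larger root
cannot satisfy the constraints (unless it coincides with the smaller one). -/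
theorem statement18 (a1 a2 g : ℝ) (ha1 : 0 < a1) (ha2 : 0 < a2) (hg : 0 < g)
    (ρ : ℝ) (hmem : ρ ∈ Set.Ioo (-1 : ℝ) 1)
    (hlt : ρ < min (Real.sqrt (a2 / a1)) (Real.sqrt (a1 / a2)))
    (heq : g * ρ ^ 2 - 2 * Real.sqrt (a1 * a2) * ρ + (a1 + a2 - g) = 0) :
    ρ = (Real.sqrt (a1 * a2) - Real.sqrt (a1 * a2 + g ^ 2 - g * (a1 + a2))) / g ∧
    (∀ ρ' : ℝ, ρ' ∈ Set.Ioo (-1 : ℝ) 1 →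
      ρ' < min (Real.sqrt (a2 / a1)) (Real.sqrt (a1 / a2)) →
      g * ρ' ^ 2 - 2 * Real.sqrt (a1 * a2) * ρ' + (a1 + a2 - g) = 0 → ρ' = ρ) ∧
    ((Real.sqrt (a1 * a2) + Real.sqrt (a1 * a2 + g ^ 2 - g * (a1 + a2))) / g ≠ ρ →
      ¬ ((Real.sqrt (a1 * a2) + Real.sqrt (a1 * a2 + g ^ 2 - g * (a1 + a2))) / g
            ∈ Set.Ioo (-1 : ℝ) 1 ∧
          (Real.sqrt (a1 * a2) + Real.sqrt (a1 * a2 + g ^ 2 - g * (a1 + a2))) / g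
            < min (Real.sqrt (a2 / a1)) (Real.sqrt (a1 / a2)))) := by
  set s := Real.sqrt (a1 * a2) with hs_def
  have hkey := key18 a1 a2 g ha1 ha2 hg ρ hmem hlt heq
  have hsq : s ^ 2 = a1 * a2 := Real.sq_sqrt (by positivity)
  have hD : a1 * a2 + g ^ 2 - g * (a1 + a2) = (s - g * ρ) ^ 2 := by nlinarith [heq, hsq]
  have hsqrtD : Real.sqrt (a1 * a2 + g ^ 2 - g * (a1 + a2)) = s - g * ρ := by
    rw [hD, Real.sqrt_sq (by linarith)]
  have huniq : ∀ ρ' : ℝ, ρ' ∈ Set.Ioo (-1 : ℝ) 1 →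
      ρ' < min (Real.sqrt (a2 / a1)) (Real.sqrt (a1 / a2)) →
      g * ρ' ^ 2 - 2 * s * ρ' + (a1 + a2 - g) = 0 → ρ' = ρ := by
    intro ρ' hmem' hlt' heq'
    have hkey' := key18 a1 a2 g ha1 ha2 hg ρ' hmem' hlt' heq'
    have hD' : a1 * a2 + g ^ 2 - g * (a1 + a2) = (s - g * ρ') ^ 2 := by
      nlinarith [heq', hsq]
    have h2 : (s - g * ρ) ^ 2 = (s - g * ρ') ^ 2 := by linarith
    have h3 : s - g * ρ = s - g * ρ' := by
      have := congrArg Real.sqrt h2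
      rwa [Real.sqrt_sq (by linarith), Real.sqrt_sq (by linarith)] at this
    have : g * ρ' = g * ρ := by linarith
    exact mul_left_cancel₀ hg.ne' this
  refine ⟨?_, huniq, ?_⟩
  · rw [hsqrtD]; field_simp; ring
  · intro hne ⟨hmemr, hltr⟩
    apply hne
    apply huniq _ hmemr hltr
    rw [hsqrtD]
    field_simp
    nlinarith [heq]
end
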